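/- The interval system 𝐀x + 𝐁y ≤ 𝐛, x ≥ 0 is strongly solvable (i.e., for every A ∈ 𝐀, B ∈ 𝐁, b ∈ 𝐛 the real system Ax + By ≤ b, x ≥ 0 has a solution) if and only if the real system (A_c + A_Δ)x + (B_c + B_Δ)y¹ − (B_c − B_Δ)y² ≤ b_c − b_Δ, with x, y¹, y² ≥ 0, is solvable. -/

import Mathlib

open Finset

lemma sum_cmul_left {m : ℕ} (c : ℝ) (u v : Fin m → ℝ) :
    ∑ t, (c * u t) * v t = c * ∑ t, u t * v t := by
  rw [Finset.mul_sum]; exact Finset.sum_congr rfl (fun t _ => by ring)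

lemma sum_cmul_right {m : ℕ} (c : ℝ) (u v : Fin m → ℝ) :
    ∑ t, u t * (c * v t) = c * ∑ t, u t * v t := by
  rw [Finset.mul_sum]; exact Finset.sum_congr rfl (fun t _ => by ring)

lemma farkas_fin {m : ℕ} : ∀ (k : ℕ) (a : Fin k → (Fin m → ℝ)) (b : Fin m → ℝ),
    (∃ μ : Fin k → ℝ, (∀ i, 0 ≤ μ i) ∧ ∀ t, b t = ∑ i, μ i * a i t) ∨
    (∃ y : Fin m → ℝ, (∀ i, 0 ≤ ∑ t, a i t * y t) ∧ (∑ t, b t * y t) < 0) := by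
  intro k
  induction k with
  | zero =>
    intro a b
    by_cases hb : b = 0
    · exact Or.inl ⟨0, fun i => le_refl _, by simp [hb]⟩
    · refine Or.inr ⟨-b, fun i => i.elim0, ?_⟩
      have hpos : (0:ℝ) < ∑ t, b t * b t := by
        have hne : ∃ t, b t ≠ 0 := by
          by_contra h; push_neg at h; exact hb (funext h)
        obtain ⟨t0, ht0⟩ := hne
        refine sum_pos' (fun t _ => mul_self_nonneg _) ⟨t0, mem_univ _, mul_self_pos.mpr ht0⟩
      have he : ∑ t, b t * (-b) t = -(∑ t, b t * b t) := by
        simp [mul_neg]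
      rw [he]; linarith
  | succ k ih =>
    intro a b
    set a0 : Fin k → Fin m → ℝ := fun i => a i.castSucc with ha0
    set aℓ : Fin m → ℝ := a (Fin.last k) with haℓ
    rcases ih a0 b with ⟨μ, hμ, hb⟩ | ⟨y, hy, hby⟩
    · refine Or.inl ⟨Fin.snoc μ 0, ?_, ?_⟩
      · intro i
        refine Fin.lastCases ?_ ?_ i
        · simp
        · intro j; simpa using hμ j
      · intro t
        rw [Fin.sum_univ_castSucc]
        simp [hb t]
        rfl
    · set α : ℝ := ∑ t, aℓ t * y t with hα
      by_cases hαpos : 0 ≤ α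
      · refine Or.inr ⟨y, ?_, hby⟩
        intro i
        refine Fin.lastCases ?_ (fun j => hy j) i
        exact hαpos
      · push_neg at hαpos
        have hαne : α ≠ 0 := ne_of_lt hαpos
        set β : Fin k → ℝ := fun i => ∑ t, a0 i t * y t with hβ
        set βb : ℝ := ∑ t, b t * y t with hβb
        rcases ih (fun i t => a0 i t - (β i / α) * aℓ t) (fun t => b t - (βb / α) * aℓ t)
          with ⟨μ, hμ, hfb⟩ | ⟨w, hw, hbw⟩
        · have h1 : 0 < βb / α := div_pos_of_neg_of_neg hby hαpos
          have h2 : ∑ i, μ i * (β i / α) ≤ 0 := by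
            apply Finset.sum_nonpos
            intro i _
            exact mul_nonpos_of_nonneg_of_nonpos (hμ i)
              (div_nonpos_of_nonneg_of_nonpos (hy i) (le_of_lt hαpos))
          refine Or.inl ⟨Fin.snoc μ (βb / α - ∑ i, μ i * (β i / α)), ?_, ?_⟩
          · intro i
            refine Fin.lastCases ?_ ?_ i
            · rw [Fin.snoc_last]; linarith
            · intro j; simpa using hμ j
          · intro t
            rw [Fin.sum_univ_castSucc]
            simp only [Fin.snoc_castSucc, Fin.snoc_last]
            have h3 := hfb t
            have hsum : ∑ i, μ i * (a0 i t - β i / α * aℓ t)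
                = ∑ i, μ i * a0 i t - (∑ i, μ i * (β i / α)) * aℓ t := by
              rw [Finset.sum_mul, ← Finset.sum_sub_distrib]
              exact Finset.sum_congr rfl (fun i _ => by ring)
            rw [hsum] at h3
            have he : (βb / α - ∑ i, μ i * (β i / α)) * aℓ t
                = βb / α * aℓ t - (∑ i, μ i * (β i / α)) * aℓ t := by ring
            rw [he]; linarith
        · set γ : ℝ := ∑ t, aℓ t * w t with hγ
          refine Or.inr ⟨fun t => w t - (γ / α) * y t, ?_, ?_⟩
          · intro i
            refine Fin.lastCases ?_ ?_ i
            · have e : ∑ t, aℓ t * (w t - γ / α * y t) = γ - γ / α * α := by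
                simp only [mul_sub, Finset.sum_sub_distrib, sum_cmul_right, ← hγ, ← hα]
              rw [e, div_mul_cancel₀ _ hαne]
              simp
            · intro j
              have h := hw j
              have e1 : ∑ t, (a0 j t - β j / α * aℓ t) * w t
                  = (∑ t, a0 j t * w t) - β j / α * γ := by
                simp only [sub_mul, Finset.sum_sub_distrib, sum_cmul_left, ← hγ]
              have e2 : ∑ t, a0 j t * (w t - γ / α * y t)
                  = (∑ t, a0 j t * w t) - γ / α * β j := by
                simp only [mul_sub, Finset.sum_sub_distrib, sum_cmul_right]
                rfl
              rw [e1] at h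
              rw [e2]
              have hcomm : β j / α * γ = γ / α * β j := by ring
              linarith
          · have e1 : ∑ t, (b t - βb / α * aℓ t) * w t = (∑ t, b t * w t) - βb / α * γ := by
              simp only [sub_mul, Finset.sum_sub_distrib, sum_cmul_left, ← hγ]
            have e2 : ∑ t, b t * (w t - γ / α * y t) = (∑ t, b t * w t) - γ / α * βb := by
              simp only [mul_sub, Finset.sum_sub_distrib, sum_cmul_right, ← hβb]
            rw [e1] at hbw
            rw [e2]
            have hcomm : βb / α * γ = γ / α * βb := by ring
            linarith

lemma farkas {ι : Type} [Fintype ι] {m : ℕ} (a : ι → Fin m → ℝ) (b : Fin m → ℝ) :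
    (∃ μ : ι → ℝ, (∀ i, 0 ≤ μ i) ∧ ∀ t, b t = ∑ i, μ i * a i t) ∨
    (∃ y : Fin m → ℝ, (∀ i, 0 ≤ ∑ t, a i t * y t) ∧ (∑ t, b t * y t) < 0) := by
  classical
  let e := Fintype.equivFin ι
  rcases farkas_fin (Fintype.card ι) (fun i => a (e.symm i)) b with ⟨μ, hμ, hb⟩ | ⟨y, hy, hby⟩
  · refine Or.inl ⟨fun i => μ (e i), fun i => hμ _, fun t => ?_⟩
    rw [hb t]
    exact (Fintype.sum_equiv e _ _ (fun i => by simp)).symm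
  · exact Or.inr ⟨y, fun i => by simpa using hy (e i), hby⟩

lemma swap_sum {m k : ℕ} (u : Fin m → ℝ) (M : Matrix (Fin m) (Fin k) ℝ) (v : Fin k → ℝ) :
    ∑ t, u t * (M.mulVec v) t = ∑ j, (∑ t, M t j * u t) * v j := by
  simp only [Matrix.mulVec, dotProduct, Finset.mul_sum, Finset.sum_mul]
  rw [Finset.sum_comm]
  exact Finset.sum_congr rfl fun j _ => Finset.sum_congr rfl fun t _ => by ring

/-- Strong solvability of `𝐀x + 𝐁y ≤ 𝐛, x ≥ 0` is equivalent to solvability of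
`(A_c + A_Δ)x + (B_c + B_Δ)y¹ − (B_c − B_Δ)y² ≤ b_c − b_Δ`, `x, y¹, y² ≥ 0`. -/
theorem strong_solvability_mixed_iff {m n n' : ℕ}
    (Ac AΔ : Matrix (Fin m) (Fin n) ℝ)
    (Bc BΔ : Matrix (Fin m) (Fin n') ℝ)
    (bc bΔ : Fin m → ℝ)
    (hAΔ : ∀ i j, 0 ≤ AΔ i j) (hBΔ : ∀ i j, 0 ≤ BΔ i j) (hbΔ : ∀ i, 0 ≤ bΔ i) :
    (∀ A : Matrix (Fin m) (Fin n) ℝ, (∀ i j, |A i j - Ac i j| ≤ AΔ i j) →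
     ∀ B : Matrix (Fin m) (Fin n') ℝ, (∀ i j, |B i j - Bc i j| ≤ BΔ i j) →
     ∀ b : Fin m → ℝ, (∀ i, |b i - bc i| ≤ bΔ i) →
      ∃ (x : Fin n → ℝ) (y : Fin n' → ℝ),
        (∀ i, (A.mulVec x) i + (B.mulVec y) i ≤ b i) ∧ (∀ j, 0 ≤ x j))
    ↔
    (∃ (x : Fin n → ℝ) (y1 y2 : Fin n' → ℝ),
      (∀ i, ((Ac + AΔ).mulVec x) i + ((Bc + BΔ).mulVec y1) i
          - ((Bc - BΔ).mulVec y2) i ≤ bc i - bΔ i) ∧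
      (∀ j, 0 ≤ x j) ∧ (∀ j, 0 ≤ y1 j) ∧ (∀ j, 0 ≤ y2 j)) := by
  classical
  constructor
  · -- forward: strong solvability → aggregated system solvable
    intro h
    rcases farkas (ι := Fin n ⊕ Fin n' ⊕ Fin n' ⊕ Fin m)
        (fun i t => Sum.elim (fun j => (Ac + AΔ) t j)
          (Sum.elim (fun j => (Bc + BΔ) t j)
            (Sum.elim (fun j => -((Bc - BΔ) t j))
              (fun i' => if t = i' then (1:ℝ) else 0))) i)
        (fun t => bc t - bΔ t) with ⟨μ, hμ, hb⟩ | ⟨u, hu, hbu⟩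
    · refine ⟨fun j => μ (Sum.inl j), fun j => μ (Sum.inr (Sum.inl j)),
        fun j => μ (Sum.inr (Sum.inr (Sum.inl j))), ?_, fun j => hμ _, fun j => hμ _,
        fun j => hμ _⟩
      intro i
      have hbi := hb i
      simp only [Fintype.sum_sum_type, Sum.elim_inl, Sum.elim_inr, mul_ite, mul_one,
        mul_zero, Finset.sum_ite_eq, Finset.mem_univ, if_true, mul_neg,
        Finset.sum_neg_distrib] at hbi
      simp only [Matrix.mulVec, dotProduct]
      have e1 : ∑ j, (Ac + AΔ) i j * μ (Sum.inl j)
          = ∑ j, μ (Sum.inl j) * (Ac + AΔ) i j :=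
        Finset.sum_congr rfl fun j _ => mul_comm _ _
      have e2 : ∑ j, (Bc + BΔ) i j * μ (Sum.inr (Sum.inl j))
          = ∑ j, μ (Sum.inr (Sum.inl j)) * (Bc + BΔ) i j :=
        Finset.sum_congr rfl fun j _ => mul_comm _ _
      have e3 : ∑ j, (Bc - BΔ) i j * μ (Sum.inr (Sum.inr (Sum.inl j)))
          = ∑ j, μ (Sum.inr (Sum.inr (Sum.inl j))) * (Bc - BΔ) i j :=
        Finset.sum_congr rfl fun j _ => mul_comm _ _
      rw [e1, e2, e3]
      have hs := hμ (Sum.inr (Sum.inr (Sum.inr i)))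
      linarith
    · exfalso
      have hu' : ∀ t, 0 ≤ u t := by
        intro t
        have := hu (Sum.inr (Sum.inr (Sum.inr t)))
        simpa [ite_mul, one_mul, zero_mul, Finset.sum_ite_eq'] using this
      set p : Fin n' → ℝ := fun j => ∑ t, u t * BΔ t j with hpdef
      set q : Fin n' → ℝ := fun j => ∑ t, u t * Bc t j with hqdef
      have hp : ∀ j, 0 ≤ p j := fun j =>
        Finset.sum_nonneg fun t _ => mul_nonneg (hu' t) (hBΔ t j)
      have hqp1 : ∀ j, 0 ≤ q j + p j := by
        intro j
        have h1 := hu (Sum.inr (Sum.inl j))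
        simp only [Sum.elim_inl, Sum.elim_inr] at h1
        have e : ∑ t, (Bc + BΔ) t j * u t = q j + p j := by
          rw [hqdef, hpdef, ← Finset.sum_add_distrib]
          exact Finset.sum_congr rfl fun t _ => by
            simp [Matrix.add_apply]; ring
        rwa [e] at h1
      have hqp2 : ∀ j, q j ≤ p j := by
        intro j
        have h1 := hu (Sum.inr (Sum.inr (Sum.inl j)))
        simp only [Sum.elim_inl, Sum.elim_inr] at h1
        have e : ∑ t, (-((Bc - BΔ) t j)) * u t = p j - q j := by
          rw [hqdef, hpdef, ← Finset.sum_sub_distrib]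
          exact Finset.sum_congr rfl fun t _ => by
            simp [Matrix.sub_apply]; ring
        rw [e] at h1
        linarith
      set tj : Fin n' → ℝ := fun j => if p j = 0 then 0 else -q j / p j with htjdef
      have habs : ∀ j, |tj j| ≤ 1 := by
        intro j
        rw [htjdef]
        by_cases hpj : p j = 0
        · simp [hpj]
        · have hppos : 0 < p j := lt_of_le_of_ne (hp j) (Ne.symm hpj)
          simp only [hpj, if_false]
          rw [abs_div, abs_neg, abs_of_pos hppos, div_le_one hppos]
          exact abs_le.mpr ⟨by linarith [hqp1 j], hqp2 j⟩
      have hzero : ∀ j, q j + tj j * p j = 0 := by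
        intro j
        rw [htjdef]
        by_cases hpj : p j = 0
        · simp only [hpj, if_true, zero_mul, add_zero]
          have := hqp1 j; have := hqp2 j
          linarith
        · simp only [hpj, if_false]
          rw [div_mul_cancel₀ _ hpj]
          ring
      obtain ⟨x, y, hsol, hx⟩ := h (Ac + AΔ)
        (by intro i j; simp [Matrix.add_apply, abs_of_nonneg (hAΔ i j)])
        (fun t j => Bc t j + tj j * BΔ t j)
        (by
          intro i j
          have : |Bc i j + tj j * BΔ i j - Bc i j| = |tj j| * BΔ i j := by
            rw [add_sub_cancel_left, abs_mul, abs_of_nonneg (hBΔ i j)]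
          rw [this]
          calc |tj j| * BΔ i j ≤ 1 * BΔ i j :=
                mul_le_mul_of_nonneg_right (habs j) (hBΔ i j)
            _ = BΔ i j := one_mul _)
        (fun t => bc t - bΔ t)
        (by intro i; simp [abs_of_nonneg (hbΔ i)])
      have hS1 : ∑ t, u t * ((Ac + AΔ).mulVec x t
            + Matrix.mulVec (fun t j => Bc t j + tj j * BΔ t j) y t)
          ≤ ∑ t, u t * (bc t - bΔ t) :=
        Finset.sum_le_sum fun t _ => mul_le_mul_of_nonneg_left (hsol t) (hu' t)
      have hS2 : ∑ t, u t * (bc t - bΔ t) < 0 := by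
        have e : ∑ t, u t * (bc t - bΔ t) = ∑ t, (bc t - bΔ t) * u t :=
          Finset.sum_congr rfl fun t _ => mul_comm _ _
        rw [e]; exact hbu
      have hSsplit : ∑ t, u t * ((Ac + AΔ).mulVec x t
            + Matrix.mulVec (fun t j => Bc t j + tj j * BΔ t j) y t)
          = ∑ t, u t * (Ac + AΔ).mulVec x t
            + ∑ t, u t * Matrix.mulVec (fun t j => Bc t j + tj j * BΔ t j) y t := by
        rw [← Finset.sum_add_distrib]
        exact Finset.sum_congr rfl fun t _ => by ring
      have hSA : 0 ≤ ∑ t, u t * (Ac + AΔ).mulVec x t := by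
        rw [swap_sum]
        refine Finset.sum_nonneg fun j _ => mul_nonneg ?_ (hx j)
        have h1 := hu (Sum.inl j)
        simpa only [Sum.elim_inl] using h1
      have hSB : ∑ t, u t * Matrix.mulVec (fun t j => Bc t j + tj j * BΔ t j) y t = 0 := by
        refine (swap_sum u _ y).trans ?_
        apply Finset.sum_eq_zero
        intro j _
        have e : ∑ t, (Bc t j + tj j * BΔ t j) * u t = q j + tj j * p j := by
          rw [hqdef, hpdef]
          dsimp only
          rw [Finset.mul_sum, ← Finset.sum_add_distrib]
          exact Finset.sum_congr rfl fun t _ => by ring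
        show (∑ t, (Bc t j + tj j * BΔ t j) * u t) * y j = 0
        rw [e, hzero j, zero_mul]
      linarith
  · -- backward
    rintro ⟨x, y1, y2, hsol, hx, hy1, hy2⟩ A hA B hB b hb
    refine ⟨x, fun j => y1 j - y2 j, ?_, hx⟩
    intro i
    simp only [Matrix.mulVec, dotProduct, Matrix.add_apply, Matrix.sub_apply] at hsol ⊢
    have hsoli := hsol i
    have h1 : ∑ j, A i j * x j ≤ ∑ j, (Ac i j + AΔ i j) * x j :=
      Finset.sum_le_sum fun j _ => mul_le_mul_of_nonneg_right
        (by have := abs_le.mp (hA i j); linarith [this.2]) (hx j)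
    have h2 : ∑ j, B i j * y1 j ≤ ∑ j, (Bc i j + BΔ i j) * y1 j :=
      Finset.sum_le_sum fun j _ => mul_le_mul_of_nonneg_right
        (by have := abs_le.mp (hB i j); linarith [this.2]) (hy1 j)
    have h3 : ∑ j, (Bc i j - BΔ i j) * y2 j ≤ ∑ j, B i j * y2 j :=
      Finset.sum_le_sum fun j _ => mul_le_mul_of_nonneg_right
        (by have := abs_le.mp (hB i j); linarith [this.1]) (hy2 j)
    have hsplit : ∑ j, B i j * (y1 j - y2 j) = ∑ j, B i j * y1 j - ∑ j, B i j * y2 j := by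
      rw [← Finset.sum_sub_distrib]
      exact Finset.sum_congr rfl fun j _ => by ring
    have hbi : bc i - bΔ i ≤ b i := by
      have := abs_le.mp (hb i); linarith [this.1]
    rw [hsplit]
    linarith
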